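/- Let G be an almost simple group with socle T and let R be a Sylow r-subgroup of G with R ∩ T ≠ 1. If R is contained in a unique maximal subgroup of G, then G/T is an r-group. -/

import Mathlib

open scoped Pointwise


/-- Corollary 2.5: let `G` be an almost simple group with socle `T` and let `R` be a Sylow
`r`-subgroup of `G` with `R ⊓ T ≠ 1`. If `R` is contained in a unique maximal subgroup of
`G`, then `G/T` is an `r`-group. -/
theorem stmt_15 {G : Type*} [Group G] [Finite G] (T : Subgroup G) [T.Normal]
    (hsimple : IsSimpleGroup ↥T) (hnonab : ∃ a b : ↥T, a * b ≠ b * a)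
    (hcent : Subgroup.centralizer (T : Set G) = ⊥)
    {r : ℕ} (hr : r.Prime) (R : Sylow r G)
    (hRT : (R : Subgroup G) ⊓ T ≠ ⊥)
    (hu : ∃! H : Subgroup G, IsCoatom H ∧ (R : Subgroup G) ≤ H) :
    IsPGroup r (G ⧸ T) := by
  classical
  haveI := Fact.mk hr
  obtain ⟨H, ⟨hHco, hRH⟩, hHuniq⟩ := hu
  set D : Subgroup G := (R : Subgroup G) ⊓ T with hDdef
  have hDT : D ≤ T := inf_le_right
  have hDR : D ≤ (R : Subgroup G) := inf_le_left
  have hDp : IsPGroup r D := R.isPGroup'.to_inf_left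
  -- `D.subgroupOf T` is an r-subgroup of `T`
  have hQp : IsPGroup r (D.subgroupOf T) := hDp.comap_subtype
  obtain ⟨P, hQP⟩ := hQp.exists_le_sylow
  have hPm : IsPGroup r ((P : Subgroup ↥T).map T.subtype) := P.isPGroup'.map _
  obtain ⟨R', hPR'⟩ := hPm.exists_le_sylow
  obtain ⟨g, hg⟩ := MulAction.exists_smul_eq G R' R
  have hmapT : (P : Subgroup ↥T).map T.subtype ≤ T := Subgroup.map_subtype_le _
  -- conjugate of P lands inside D
  have h1 : MulAut.conj g • ((P : Subgroup ↥T).map T.subtype) ≤ D := by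
    refine le_inf ?_ ?_
    · have : MulAut.conj g • ((P : Subgroup ↥T).map T.subtype)
          ≤ MulAut.conj g • (R' : Subgroup G) :=
        Subgroup.pointwise_smul_le_pointwise_smul_iff.mpr hPR'
      refine this.trans ?_
      rw [← hg]
      rfl
    · have : MulAut.conj g • ((P : Subgroup ↥T).map T.subtype)
          ≤ MulAut.conj g • T :=
        Subgroup.pointwise_smul_le_pointwise_smul_iff.mpr hmapT
      rwa [Subgroup.Normal.conj_smul_eq_self g T] at this
  -- cardinality comparisons
  have hcardDQ : Nat.card D = Nat.card (D.subgroupOf T) :=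
    Nat.card_congr (Subgroup.subgroupOfEquivOfLe hDT).symm.toEquiv
  have hcardQP : Nat.card (D.subgroupOf T) ≤ Nat.card (P : Subgroup ↥T) :=
    Nat.card_le_card_of_injective _ (Subgroup.inclusion_injective hQP)
  have hcardPPm : Nat.card (P : Subgroup ↥T) =
      Nat.card ((P : Subgroup ↥T).map T.subtype) :=
    Nat.card_congr (Subgroup.equivMapOfInjective _ _ Subtype.coe_injective).toEquiv
  have hcardPmS : Nat.card ((P : Subgroup ↥T).map T.subtype) =
      Nat.card (MulAut.conj g • ((P : Subgroup ↥T).map T.subtype) : Subgroup G) :=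
    Nat.card_congr (Subgroup.equivSMul _ _).toEquiv
  have hle : Nat.card D ≤
      Nat.card (MulAut.conj g • ((P : Subgroup ↥T).map T.subtype) : Subgroup G) := by
    rw [← hcardPmS, ← hcardPPm, hcardDQ]; exact hcardQP
  have heq : MulAut.conj g • ((P : Subgroup ↥T).map T.subtype) = D :=
    Subgroup.eq_of_le_of_card_ge h1 hle
  -- hence `D.subgroupOf T = P`
  have hQeqP : D.subgroupOf T = (P : Subgroup ↥T) := by
    refine Subgroup.eq_of_le_of_card_ge hQP ?_
    rw [hcardPPm, hcardPmS, heq, hcardDQ]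
  -- and `P.map T.subtype = D`
  have hPmD : (P : Subgroup ↥T).map T.subtype = D := by
    rw [← hQeqP, Subgroup.subgroupOf_map_subtype, inf_of_le_left hDT]
  -- Frattini argument
  have hfr : Subgroup.normalizer (D : Set G) ⊔ T = ⊤ := by
    have := Sylow.normalizer_sup_eq_top (G := G) (N := T) P
    rwa [hPmD] at this
  -- R normalizes D
  have hRN : (R : Subgroup G) ≤ Subgroup.normalizer (D : Set G) := by
    intro x hx
    rw [Subgroup.mem_normalizer_iff]
    intro h
    constructor
    · intro hmem
      obtain ⟨h1, h2⟩ := Subgroup.mem_inf.mp hmem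
      exact Subgroup.mem_inf.mpr ⟨mul_mem (mul_mem hx h1) (inv_mem hx),
        Subgroup.Normal.conj_mem ‹T.Normal› h h2 x⟩
    · intro hmem
      obtain ⟨h1, h2⟩ := Subgroup.mem_inf.mp hmem
      have hx1 : x⁻¹ * (x * h * x⁻¹) * x⁻¹⁻¹ ∈ (R : Subgroup G) :=
        mul_mem (mul_mem (inv_mem hx) h1) (inv_mem (inv_mem hx))
      have hx2 : x⁻¹ * (x * h * x⁻¹) * x⁻¹⁻¹ ∈ T :=
        Subgroup.Normal.conj_mem ‹T.Normal› _ h2 x⁻¹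
      have heqh : x⁻¹ * (x * h * x⁻¹) * x⁻¹⁻¹ = h := by group
      rw [heqh] at hx1 hx2
      exact Subgroup.mem_inf.mpr ⟨hx1, hx2⟩
  -- T is nontrivial and nonabelian, so D is not normal in G
  have hNne : Subgroup.normalizer (D : Set G) ≠ ⊤ := by
    intro htop
    have hDnorm : D.Normal := Subgroup.normalizer_eq_top_iff.mp htop
    haveI := hDnorm
    have hQnorm : (D.subgroupOf T).Normal := Subgroup.normal_subgroupOf
    rcases hQnorm.eq_bot_or_eq_top with hbot | htop'
    · apply hRT
      have := congrArg (Subgroup.map T.subtype) hbot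
      rwa [Subgroup.subgroupOf_map_subtype, inf_of_le_left hDT,
        Subgroup.map_bot] at this
    · -- T ≤ D ≤ R, so T is an r-group, hence has nontrivial center, hence abelian
      have hTD : T ≤ D := by rwa [Subgroup.subgroupOf_eq_top] at htop'
      have hTp : IsPGroup r T := R.isPGroup'.to_le (hTD.trans hDR)
      have hTpe : IsPGroup r ↥T :=
        fun x => hTp ⟨(x : G), x.2⟩
      obtain ⟨a, b, hab⟩ := hnonab
      haveI : Nontrivial ↥T := by
        refine ⟨a, 1, fun h => hab ?_⟩
        subst h; simp
      have hcenter := hTpe.center_nontrivial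
      have hcne : (Subgroup.center ↥T) ≠ ⊥ := by
        intro h
        rw [h] at hcenter
        exact (not_subsingleton_iff_nontrivial.mpr hcenter) inferInstance
      rcases IsSimpleGroup.eq_bot_or_eq_top_of_normal (Subgroup.center ↥T)
        inferInstance with h | h
      · exact hcne h
      · apply hab
        have hbmem : b ∈ Subgroup.center ↥T := h ▸ Subgroup.mem_top b
        exact Subgroup.mem_center_iff.mp hbmem a
  -- so the normalizer is proper, hence contained in H
  rcases eq_top_or_exists_le_coatom (Subgroup.normalizer (D : Set G)) with h | ⟨M, hMco, hNM⟩
  · exact absurd h hNne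
  have hMH : M = H := hHuniq M ⟨hMco, hRN.trans hNM⟩
  have hNH : Subgroup.normalizer (D : Set G) ≤ H := hMH ▸ hNM
  -- T is not contained in H
  have hTH : ¬ T ≤ H := by
    intro hTle
    have : (⊤ : Subgroup G) ≤ H := by
      rw [← hfr]; exact sup_le hNH hTle
    exact hHco.1 (top_le_iff.mp this)
  -- R ⊔ T = ⊤
  have hsup : (R : Subgroup G) ⊔ T = ⊤ := by
    rcases eq_top_or_exists_le_coatom ((R : Subgroup G) ⊔ T) with h | ⟨M', hM'co, hM'⟩
    · exact h
    · have hM'H : M' = H := hHuniq M' ⟨hM'co, le_sup_left.trans hM'⟩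
      exact absurd (hM'H ▸ (le_sup_right.trans hM')) hTH
  -- conclude
  have hmaptop : (R : Subgroup G).map (QuotientGroup.mk' T) = ⊤ := by
    have := congrArg (Subgroup.map (QuotientGroup.mk' T)) hsup
    rwa [Subgroup.map_sup, QuotientGroup.map_mk'_self, sup_bot_eq,
      Subgroup.map_top_of_surjective _ (QuotientGroup.mk'_surjective T)] at this
  have hp : IsPGroup r ((R : Subgroup G).map (QuotientGroup.mk' T)) :=
    R.isPGroup'.map _
  rw [hmaptop] at hp
  exact hp.of_equiv Subgroup.topEquiv
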